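/- For ρ > -1, Re(μ) > 0, the Riemann–Liouville fractional integral of order μ in Y with base point B applied to (Y−B)^ρ ₖH_n^ρ(X, w(Y−B)) equals (Y−B)^{ρ+μ} ₖH_n^{ρ+μ}(X, w(Y−B)) for Y > B. (Here the superscript of the Hermite–Konhauser polynomial shifts by μ.) -/

import Mathlib

open MeasureTheory

lemma beta_int (u v : ℂ) (hu : 0 < u.re) (hv : 0 < v.re) {B Y : ℝ} (hY : B < Y) :
    ∫ t in B..Y, ((Y - t : ℝ) : ℂ) ^ (u - 1) * ((t - B : ℝ) : ℂ) ^ (v - 1)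
      = ((Y - B : ℝ) : ℂ) ^ (u + v - 1) *
        (Complex.Gamma u * Complex.Gamma v / Complex.Gamma (u + v)) := by
  have h0 : (0:ℝ) < Y - B := by linarith
  have hG : Complex.Gamma (v + u) ≠ 0 :=
    Complex.Gamma_ne_zero_of_re_pos (by rw [Complex.add_re]; positivity)
  have hbeta : Complex.betaIntegral v u
      = Complex.Gamma v * Complex.Gamma u / Complex.Gamma (v + u) := by
    rw [Complex.Gamma_mul_Gamma_eq_betaIntegral hv hu]
    field_simp
  calc ∫ t in B..Y, ((Y - t : ℝ) : ℂ) ^ (u - 1) * ((t - B : ℝ) : ℂ) ^ (v - 1)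
      = ∫ x in (0:ℝ)..(Y - B),
          ((Y - (x + B) : ℝ) : ℂ) ^ (u - 1) * ((x + B - B : ℝ) : ℂ) ^ (v - 1) := by
        rw [intervalIntegral.integral_comp_add_right
          (fun t => ((Y - t : ℝ) : ℂ) ^ (u - 1) * ((t - B : ℝ) : ℂ) ^ (v - 1)) B]
        norm_num
    _ = ∫ x in (0:ℝ)..(Y - B), (x:ℂ) ^ (v - 1) * (((Y - B : ℝ):ℂ) - x) ^ (u - 1) := by
        apply intervalIntegral.integral_congr
        intro x _
        dsimp only
        rw [mul_comm]
        congr 2 <;> push_cast <;> ring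
    _ = ((Y - B : ℝ) : ℂ) ^ (v + u - 1) * Complex.betaIntegral v u :=
        Complex.betaIntegral_scaled v u h0
    _ = _ := by rw [hbeta, add_comm v u, mul_comm (Complex.Gamma v)]

lemma beta_integrable (u v : ℂ) (hu : 0 < u.re) (hv : 0 < v.re) {B Y : ℝ} (hY : B < Y) :
    IntervalIntegrable
      (fun t : ℝ => ((Y - t : ℝ) : ℂ) ^ (u - 1) * ((t - B : ℝ) : ℂ) ^ (v - 1))
      volume B Y := by
  have h0 : (0:ℝ) < Y - B := by linarith
  have h1 := (Complex.betaIntegral_convergent hv hu).comp_mul_right (c := (Y - B)⁻¹) enorm_ne_top enorm_ne_top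
  rw [show (0:ℝ) / (Y-B)⁻¹ = 0 by simp, show (1:ℝ) / (Y-B)⁻¹ = Y - B by field_simp] at h1
  have h2 := h1.comp_sub_right B
  rw [show (0:ℝ) + B = B by ring, show (Y - B) + B = Y by ring] at h2
  have h3 := h2.const_mul (((Y - B : ℝ):ℂ) ^ (u - 1) * ((Y - B : ℝ):ℂ) ^ (v - 1))
  rw [intervalIntegrable_iff] at h3 ⊢
  apply h3.congr_fun ?_ measurableSet_uIoc
  intro t ht
  rw [Set.uIoc_of_le hY.le] at ht
  have htB : (0:ℝ) ≤ t - B := by linarith [ht.1]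
  have hYt : (0:ℝ) ≤ Y - t := by linarith [ht.2]
  have hne : (Y - B : ℝ) ≠ 0 := h0.ne'
  have er : (1:ℝ) - (t - B) * (Y - B)⁻¹ = (Y - t) * (Y - B)⁻¹ := by
    field_simp
    ring
  have e1 : (1 : ℂ) - ((((t - B) * (Y - B)⁻¹ : ℝ)):ℂ) = (((Y - t) * (Y - B)⁻¹ : ℝ) : ℂ) := by
    rw [← Complex.ofReal_one, ← Complex.ofReal_sub, er]
  simp only [e1]
  have e2 : ((t - B : ℝ) : ℂ) ^ (v - 1)
      = ((Y - B : ℝ):ℂ) ^ (v - 1) * (((t - B) * (Y - B)⁻¹ : ℝ) : ℂ) ^ (v - 1) := by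
    rw [← Complex.mul_cpow_ofReal_nonneg h0.le (by positivity)]
    norm_cast
    field_simp
  have e3 : ((Y - t : ℝ) : ℂ) ^ (u - 1)
      = ((Y - B : ℝ):ℂ) ^ (u - 1) * (((Y - t) * (Y - B)⁻¹ : ℝ) : ℂ) ^ (u - 1) := by
    rw [← Complex.mul_cpow_ofReal_nonneg h0.le (by positivity)]
    norm_cast
    field_simp
  rw [e2, e3]
  ring

lemma cancel_helper (A E Γm Γv Γmv P S R : ℂ) (hm : Γm ≠ 0) (hv : Γv ≠ 0) (hmv : Γmv ≠ 0) :
    1 / Γm * (A / (P * S * R) / Γv * (E * (Γm * Γv / Γmv))) = A / (P * Γmv * S * R) * E := by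
  rcases eq_or_ne P 0 with h | h
  · simp [h]
  rcases eq_or_ne S 0 with h2 | h2
  · simp [h2]
  rcases eq_or_ne R 0 with h3 | h3
  · simp [h3]
  field_simp

noncomputable def poch (a : ℂ) (k : ℕ) : ℂ := ∏ i ∈ Finset.range k, (a + i)

noncomputable def hermiteKonhauser (ρ : ℂ) (Υ n : ℕ) (X Y : ℂ) : ℂ :=
  ∑ s ∈ Finset.range (n / 2 + 1), ∑ r ∈ Finset.range (n - s + 1),
    ((-1) ^ s * poch (-(n : ℂ)) (2 * s) * poch (-(n : ℂ)) (s + r)) /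
      (poch (-(n : ℂ)) s * Complex.Gamma (ρ + 1 + (Υ : ℂ) * r) *
        (s.factorial : ℂ) * (r.factorial : ℂ)) *
      (2 * X) ^ (n - 2 * s) * Y ^ (Υ * r)

set_option maxHeartbeats 2000000 in
/-- Riemann–Liouville fractional integral image of the 2D Hermite–Konhauser polynomial:
`I^μ_{B+}[(Y-B)^ρ ₖH_n^ρ(X, w(Y-B))] = (Y-B)^{ρ+μ} ₖH_n^{ρ+μ}(X, w(Y-B))`. -/
theorem riemannLiouville_integral_hermiteKonhauser (ρ : ℝ) (hρ : -1 < ρ) (μ : ℂ)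
    (hμ : 0 < μ.re) (Υ n : ℕ) (hΥ : 0 < Υ) (X w : ℂ) (B Y : ℝ) (hY : B < Y) :
    (1 / Complex.Gamma μ) *
        (∫ t in B..Y, ((Y - t : ℝ) : ℂ) ^ (μ - 1) *
          (((t - B : ℝ) : ℂ) ^ (ρ : ℂ) * hermiteKonhauser (ρ : ℂ) Υ n X (w * ((t : ℂ) - B)))) =
      ((Y - B : ℝ) : ℂ) ^ ((ρ : ℂ) + μ) *
        hermiteKonhauser ((ρ : ℂ) + μ) Υ n X (w * ((Y : ℂ) - B)) := by
  have h0 : (0:ℝ) < Y - B := by linarith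
  have hne : ((Y - B : ℝ) : ℂ) ≠ 0 := Complex.ofReal_ne_zero.mpr h0.ne'
  obtain ⟨C, hC⟩ : ∃ C : ℕ → ℕ → ℂ, C = fun s r =>
      ((-1) ^ s * poch (-(n : ℂ)) (2 * s) * poch (-(n : ℂ)) (s + r)) *
        (2 * X) ^ (n - 2 * s) * w ^ (Υ * r) /
        (poch (-(n : ℂ)) s * (s.factorial : ℂ) * (r.factorial : ℂ)) := ⟨_, rfl⟩
  obtain ⟨v, hv⟩ : ∃ v : ℕ → ℂ, v = fun r : ℕ => (ρ : ℂ) + 1 + (Υ : ℂ) * (r : ℕ) := ⟨_, rfl⟩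
  have hvre : ∀ r : ℕ, 0 < (v r).re := by
    intro r
    have : (0:ℝ) ≤ (Υ:ℝ) * r := by positivity
    simp only [hv, Complex.add_re, Complex.ofReal_re, Complex.one_re, Complex.mul_re,
      Complex.natCast_re, Complex.natCast_im, mul_zero, zero_mul, sub_zero]
    nlinarith
  have hΓv : ∀ r : ℕ, Complex.Gamma (v r) ≠ 0 :=
    fun r => Complex.Gamma_ne_zero_of_re_pos (hvre r)
  have hΓμ : Complex.Gamma μ ≠ 0 := Complex.Gamma_ne_zero_of_re_pos hμ
  have hΓμv : ∀ r : ℕ, Complex.Gamma (μ + v r) ≠ 0 := by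
    intro r
    apply Complex.Gamma_ne_zero_of_re_pos
    rw [Complex.add_re]
    linarith [hvre r]
  -- rewrite the integrand as a finite double sum
  have hcongr : ∀ t ∈ Set.uIcc B Y,
      ((Y - t : ℝ) : ℂ) ^ (μ - 1) *
        (((t - B : ℝ) : ℂ) ^ (ρ : ℂ) * hermiteKonhauser (ρ : ℂ) Υ n X (w * ((t : ℂ) - B)))
      = ∑ s ∈ Finset.range (n / 2 + 1), ∑ r ∈ Finset.range (n - s + 1),
          (C s r / Complex.Gamma (v r)) *
            (((Y - t : ℝ) : ℂ) ^ (μ - 1) * ((t - B : ℝ) : ℂ) ^ (v r - 1)) := by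
    intro t ht
    rw [hermiteKonhauser, Finset.mul_sum, Finset.mul_sum]
    refine Finset.sum_congr rfl fun s _ => ?_
    rw [Finset.mul_sum, Finset.mul_sum]
    refine Finset.sum_congr rfl fun r _ => ?_
    have hcast : ((t : ℂ) - B) = ((t - B : ℝ) : ℂ) := by push_cast; ring
    rw [hcast, mul_pow w]
    have hpow : ((t - B : ℝ) : ℂ) ^ (ρ : ℂ) * ((t - B : ℝ) : ℂ) ^ (Υ * r : ℕ)
        = ((t - B : ℝ) : ℂ) ^ (v r - 1) := by
      rcases eq_or_lt_of_le (Set.uIcc_of_le hY.le ▸ ht).1 with h | h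
      · -- t = B
        rw [← h]
        simp only [sub_self, Complex.ofReal_zero]
        have hvr : ((ρ + (Υ * r : ℕ) : ℝ) : ℂ) = v r - 1 := by
          simp only [hv]; push_cast; ring
        rcases eq_or_ne (ρ : ℂ) 0 with hr0 | hr0
        · have hρ0 : ρ = 0 := by exact_mod_cast hr0
          rcases Nat.eq_zero_or_pos (Υ * r) with hm | hm
          · rw [← hvr, hρ0, hm]
            norm_num
          · rw [hr0, Complex.cpow_zero, zero_pow hm.ne', one_mul,
              Complex.zero_cpow (by rw [← hvr, hρ0]; simpa using hm.ne')]
        · have hρ0 : ρ ≠ 0 := fun hc => hr0 (by exact_mod_cast hc)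
          have hvne : v r - 1 ≠ 0 := by
            rw [← hvr]
            rw [Ne, Complex.ofReal_eq_zero]
            rcases Nat.eq_zero_or_pos (Υ * r) with hm | hm
            · rw [hm]; simpa using hρ0
            · have : (1:ℝ) ≤ ((Υ * r : ℕ) : ℝ) := by exact_mod_cast hm
              intro hc; linarith
          rw [Complex.zero_cpow hr0, zero_mul, Complex.zero_cpow hvne]
      · -- B < t
        have hnz : ((t - B : ℝ) : ℂ) ≠ 0 := Complex.ofReal_ne_zero.mpr (by linarith)
        rw [← Complex.cpow_natCast, ← Complex.cpow_add _ _ hnz]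
        congr 1
        simp only [hv]
        push_cast
        ring
    rw [← hpow]
    simp only [hC, hv, div_eq_mul_inv, mul_inv]
    ring
  rw [intervalIntegral.integral_congr hcongr]
  have hInt : ∀ (s r : ℕ), IntervalIntegrable
      (fun t : ℝ => (C s r / Complex.Gamma (v r)) *
        (((Y - t : ℝ) : ℂ) ^ (μ - 1) * ((t - B : ℝ) : ℂ) ^ (v r - 1))) volume B Y :=
    fun s r => (beta_integrable μ (v r) hμ (hvre r) hY).const_mul _
  have hIntS : ∀ s : ℕ, IntervalIntegrable
      (fun t : ℝ => ∑ r ∈ Finset.range (n - s + 1),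
        (C s r / Complex.Gamma (v r)) *
          (((Y - t : ℝ) : ℂ) ^ (μ - 1) * ((t - B : ℝ) : ℂ) ^ (v r - 1))) volume B Y := by
    intro s
    have h' := IntervalIntegrable.sum (μ := volume) (a := B) (b := Y)
      (Finset.range (n - s + 1)) (fun r _ => hInt s r)
    rwa [Finset.sum_fn] at h'
  rw [intervalIntegral.integral_finset_sum (fun s _ => hIntS s)]
  have hval : ∀ s ∈ Finset.range (n / 2 + 1),
      (∫ t in B..Y, ∑ r ∈ Finset.range (n - s + 1),
        (C s r / Complex.Gamma (v r)) *
          (((Y - t : ℝ) : ℂ) ^ (μ - 1) * ((t - B : ℝ) : ℂ) ^ (v r - 1)))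
      = ∑ r ∈ Finset.range (n - s + 1),
          (C s r / Complex.Gamma (v r)) *
            (((Y - B : ℝ) : ℂ) ^ (μ + v r - 1) *
              (Complex.Gamma μ * Complex.Gamma (v r) / Complex.Gamma (μ + v r))) := by
    intro s _
    rw [intervalIntegral.integral_finset_sum (fun r _ => hInt s r)]
    exact Finset.sum_congr rfl fun r _ => by
      rw [intervalIntegral.integral_const_mul, beta_int μ (v r) hμ (hvre r) hY]
  rw [Finset.sum_congr rfl hval, hermiteKonhauser, Finset.mul_sum, Finset.mul_sum]
  refine Finset.sum_congr rfl fun s _ => ?_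
  rw [Finset.mul_sum, Finset.mul_sum]
  refine Finset.sum_congr rfl fun r _ => ?_
  have hYB : ((Y : ℂ) - B) = ((Y - B : ℝ) : ℂ) := by push_cast; ring
  rw [hYB, mul_pow w]
  have hΓeq : Complex.Gamma ((ρ : ℂ) + μ + 1 + (Υ : ℂ) * r) = Complex.Gamma (μ + v r) := by
    congr 1
    simp only [hv]
    ring
  rw [hΓeq]
  have hexp : μ + v r - 1 = ((ρ : ℂ) + μ) + ((Υ * r : ℕ) : ℂ) := by
    simp only [hv]; push_cast; ring
  rw [hexp, Complex.cpow_add _ _ hne, Complex.cpow_natCast]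
  simp only [hC]
  linear_combination cancel_helper
    ((-1 : ℂ) ^ s * poch (-(n : ℂ)) (2 * s) * poch (-(n : ℂ)) (s + r) *
      (2 * X) ^ (n - 2 * s) * w ^ (Υ * r))
    (((Y - B : ℝ) : ℂ) ^ ((ρ : ℂ) + μ) * ((Y - B : ℝ) : ℂ) ^ (Υ * r))
    (Complex.Gamma μ) (Complex.Gamma (v r)) (Complex.Gamma (μ + v r))
    (poch (-(n : ℂ)) s) (s.factorial : ℂ) (r.factorial : ℂ)
    hΓμ (hΓv r) (hΓμv r)
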